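/- For all real μ > 0 and Λ > 0, 1/(2·μ·(Λ+μ)) ≤ (e^{-Λ/μ} − 1 + Λ/μ)/Λ². That is, I_{E_μ} ≤ I_{D_μ}: with the same mean lifetime, the fluctuation integral (and hence the variance of the number of mRNAs at equilibrium) for an exponential lifetime distribution is smaller than for a deterministic lifetime. -/

import Mathlib

open Real

private lemma hd1 (x : ℝ) : HasDerivAt (fun t : ℝ => 1 - t + t^2/2 - exp (-t)) (x + exp (-x) - 1) x := by
  have h1 : HasDerivAt (fun t : ℝ => exp (-t)) (-exp (-x)) x := by
    simpa [Function.comp_def] using ((Real.hasDerivAt_exp (-x)).comp x ((hasDerivAt_id x).neg))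
  have h2 : HasDerivAt (fun t : ℝ => 1 - t + t^2/2) (-1 + (2 * x ^ 1)/2) x :=
    (((hasDerivAt_id x).const_sub 1).add ((hasDerivAt_pow 2 x).div_const 2))
  have := h2.sub h1
  exact this.congr_deriv (by ring)

private lemma g_nonneg {x : ℝ} (hx : 0 ≤ x) : 0 ≤ 1 - x + x^2/2 - exp (-x) := by
  have hmono : Monotone (fun t : ℝ => 1 - t + t^2/2 - exp (-t)) := by
    apply monotone_of_deriv_nonneg
    · exact fun y => (hd1 y).differentiableAt
    · intro y
      rw [(hd1 y).deriv]
      nlinarith [Real.add_one_le_exp (-y)]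
  have := hmono hx
  simpa using this

private lemma hd2 (x : ℝ) : HasDerivAt (fun t : ℝ => exp (-t) - (1 - t + t^2/2 - t^3/6)) (1 - x + x^2/2 - exp (-x)) x := by
  have h1 : HasDerivAt (fun t : ℝ => exp (-t)) (-exp (-x)) x := by
    simpa [Function.comp_def] using ((Real.hasDerivAt_exp (-x)).comp x ((hasDerivAt_id x).neg))
  have h2 : HasDerivAt (fun t : ℝ => 1 - t + t^2/2 - t^3/6)
      (-1 + (2 * x ^ 1)/2 - (3 * x ^ 2)/6) x :=
    ((((hasDerivAt_id x).const_sub 1).add ((hasDerivAt_pow 2 x).div_const 2)).sub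
      ((hasDerivAt_pow 3 x).div_const 6))
  have := h1.sub h2
  exact this.congr_deriv (by ring)

private lemma cubic_le_exp_neg {x : ℝ} (hx : 0 ≤ x) : 1 - x + x^2/2 - x^3/6 ≤ exp (-x) := by
  have hmono : MonotoneOn (fun t : ℝ => exp (-t) - (1 - t + t^2/2 - t^3/6)) (Set.Ici 0) := by
    apply monotoneOn_of_deriv_nonneg (convex_Ici 0)
    · exact (Continuous.continuousOn (by continuity))
    · intro y hy
      exact (hd2 y).differentiableAt.differentiableWithinAt
    · intro y hy
      rw [(hd2 y).deriv]
      exact g_nonneg (le_of_lt (by simpa using hy))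
  have := hmono (Set.self_mem_Ici) hx hx
  simp only [neg_zero, Real.exp_zero] at this
  linarith

/-- `I_{E_μ} ≤ I_{D_μ}`: the fluctuation integral for an exponential lifetime is smaller
than for a deterministic lifetime with the same mean. -/
theorem I_exp_le_I_det (mu Lam : ℝ) (hmu : 0 < mu) (hLam : 0 < Lam) :
    1 / (2 * mu * (Lam + mu)) ≤ (Real.exp (-(Lam / mu)) - 1 + Lam / mu) / Lam ^ 2 := by
  set x := Lam / mu with hxdef
  have hx0 : 0 < x := div_pos hLam hmu
  have key : x^2 ≤ 2 * (x+1) * (Real.exp (-x) - 1 + x) := by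
    rcases le_total x 2 with h | h
    · have hexp := cubic_le_exp_neg hx0.le
      have hp : (0:ℝ) ≤ 2 * (x+1) := by linarith
      have h2 := mul_le_mul_of_nonneg_left
        (by linarith : 1 - x + x^2/2 - x^3/6 - 1 + x ≤ Real.exp (-x) - 1 + x) hp
      nlinarith [mul_nonneg (mul_nonneg (mul_nonneg hx0.le hx0.le) hx0.le) (sub_nonneg.2 h)]
    · have hexp : 0 < Real.exp (-x) := Real.exp_pos _
      nlinarith
  have hΛ : Lam = x * mu := by rw [hxdef, div_mul_cancel₀ _ hmu.ne']
  rw [div_le_div_iff₀ (by positivity) (by positivity), hΛ]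
  have hmm : (0:ℝ) ≤ mu * mu := (mul_pos hmu hmu).le
  calc 1 * (x * mu)^2 = mu * mu * x^2 := by ring
    _ ≤ mu * mu * (2 * (x+1) * (Real.exp (-x) - 1 + x)) := mul_le_mul_of_nonneg_left key hmm
    _ = (Real.exp (-x) - 1 + x) * (2 * mu * (x * mu + mu)) := by ring
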